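/- Let K ≥ 2, a > 0, b ≥ 0, M ≥ 0 be reals, and let α₀, β₀, α₁, plus families (y_{t})_{t=2}^{K} and (z_{t})_{t=1}^{K} of nonnegative reals satisfy: (i) α₀ + α₁ + Σ_{t=2}^{K} y_t = aK; (ii) β₀ + Σ_{t=1}^{K} z_t = bK; (iii) α₁ + Σ_{t=2}^{K} t·y_t + Σ_{t=1}^{K} t·z_t ≤ KM. Then ((K−1)/(aK))·α₀ + ((K−1)/(2aK))·β₀ + ((K−1)/(2aK))·α₁ ≥ (K−1)(2a+b)/(2a) − (K−1)·M/(2a). -/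

import Mathlib

/-- Linear-programming step of the converse proof (large-memory regime): from the two
file-size constraints and the memory-size constraint on the aggregated subfile masses,
deduce the lower bound on the weighted combination of `α₀, β₀, α₁`. -/
theorem stmt_13 (K : ℕ) (hK : 2 ≤ K) (a b M α₀ β₀ α₁ : ℝ)
    (ha : 0 < a) (hb : 0 ≤ b) (hM : 0 ≤ M)
    (hα₀ : 0 ≤ α₀) (hβ₀ : 0 ≤ β₀) (hα₁ : 0 ≤ α₁)
    (y z : ℕ → ℝ)
    (hy : ∀ t ∈ Finset.Icc 2 K, 0 ≤ y t)
    (hz : ∀ t ∈ Finset.Icc 1 K, 0 ≤ z t)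
    (h1 : α₀ + α₁ + ∑ t ∈ Finset.Icc 2 K, y t = a * K)
    (h2 : β₀ + ∑ t ∈ Finset.Icc 1 K, z t = b * K)
    (h3 : α₁ + ∑ t ∈ Finset.Icc 2 K, (t : ℝ) * y t + ∑ t ∈ Finset.Icc 1 K, (t : ℝ) * z t
            ≤ K * M) :
    (((K : ℝ) - 1) / (a * K)) * α₀ + (((K : ℝ) - 1) / (2 * a * K)) * β₀
        + (((K : ℝ) - 1) / (2 * a * K)) * α₁
      ≥ ((K : ℝ) - 1) * (2 * a + b) / (2 * a) - ((K : ℝ) - 1) * M / (2 * a) := by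
  have hK' : (2:ℝ) ≤ (K:ℝ) := by exact_mod_cast hK
  have hY : 2 * ∑ t ∈ Finset.Icc 2 K, y t ≤ ∑ t ∈ Finset.Icc 2 K, (t : ℝ) * y t := by
    rw [Finset.mul_sum]
    refine Finset.sum_le_sum fun t ht => ?_
    have h2t : (2:ℝ) ≤ (t:ℝ) := by exact_mod_cast (Finset.mem_Icc.mp ht).1
    nlinarith [hy t ht]
  have hZ : ∑ t ∈ Finset.Icc 1 K, z t ≤ ∑ t ∈ Finset.Icc 1 K, (t : ℝ) * z t := by
    refine Finset.sum_le_sum fun t ht => ?_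
    have h1t : (1:ℝ) ≤ (t:ℝ) := by exact_mod_cast (Finset.mem_Icc.mp ht).1
    nlinarith [hz t ht]
  have key : 2 * α₀ + β₀ + α₁ ≥ (K:ℝ) * (2 * a + b - M) := by nlinarith
  have hKpos : (0:ℝ) < (K:ℝ) := by linarith
  have hK1 : (0:ℝ) ≤ (K:ℝ) - 1 := by linarith
  rw [ge_iff_le, div_mul_eq_mul_div, div_mul_eq_mul_div, div_mul_eq_mul_div,
    show ((K:ℝ) - 1) * α₀ / (a * K) = 2 * (((K:ℝ) - 1) * α₀) / (2 * a * K) by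
      rw [div_eq_div_iff (by positivity) (by positivity)]; ring,
    ← add_div, ← add_div, ← sub_div,
    div_le_div_iff₀ (by positivity) (by positivity)]
  nlinarith [mul_le_mul_of_nonneg_left key hK1, mul_pos ha hKpos, mul_nonneg hK1 hα₀,
    mul_nonneg hK1 hβ₀, mul_nonneg hK1 hα₁]
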